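/- Under the iterative construction of the sequences (k_i) and (b_i), for every i ≥ 2 one has b_{i+1}(k_i) = −1. -/

import Mathlib

/-- For every `i ≥ 2`, `b_{i+1}(k_i) = -1`. -/
theorem stmt_9 (k : ℕ → ℕ) (b : ℕ → ℝ → ℝ)
    (hk1 : k 1 = 1) (hk2 : k 2 = 2)
    (hb2 : ∀ x : ℝ, b 2 x
      = Int.fract (x / (k 1 : ℝ)) - ((k 2 : ℝ) / (k 1 : ℝ)) * Int.fract (x / (k 2 : ℝ)))
    (hmono : ∀ i : ℕ, 2 ≤ i → k i < k (i + 1))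
    (hne : ∀ i : ℕ, 2 ≤ i → b i ((k (i + 1) : ℝ)) ≠ b i ((k i : ℝ)))
    (hleast : ∀ i : ℕ, 2 ≤ i → ∀ m : ℕ, k i < m → m < k (i + 1) → b i (m : ℝ) = b i ((k i : ℝ)))
    (hbrec : ∀ i : ℕ, 2 ≤ i → ∀ x : ℝ, b (i + 1) x
      = b i x + (1 + b i ((k i : ℝ)))
          * (Int.fract (x / (k i : ℝ))
            - ((k (i + 1) : ℝ) / (k i : ℝ)) * Int.fract (x / (k (i + 1) : ℝ)))) :
    ∀ i : ℕ, 2 ≤ i → b (i + 1) ((k i : ℝ)) = -1 := by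
  -- first: k i > 0 for i ≥ 2
  have hkpos : ∀ i : ℕ, 2 ≤ i → 0 < k i := by
    intro i hi
    induction i with
    | zero => omega
    | succ n ih =>
      rcases Nat.lt_or_ge n 2 with h | h
      · have hn : n = 1 := by omega
        subst hn
        rw [hk2]; norm_num
      · exact lt_trans (ih h) (hmono n h)
  intro i hi
  have hki : (0 : ℝ) < (k i : ℝ) := by exact_mod_cast hkpos i hi
  have hlt : (k i : ℝ) < (k (i + 1) : ℝ) := by exact_mod_cast hmono i hi
  have hki1 : (0 : ℝ) < (k (i + 1) : ℝ) := lt_trans hki hlt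
  rw [hbrec i hi]
  have h1 : Int.fract ((k i : ℝ) / (k i : ℝ)) = 0 := by
    rw [div_self hki.ne']
    exact Int.fract_one
  have h2 : Int.fract ((k i : ℝ) / (k (i + 1) : ℝ)) = (k i : ℝ) / (k (i + 1) : ℝ) := by
    apply Int.fract_eq_self.mpr
    constructor
    · positivity
    · exact (div_lt_one hki1).mpr hlt
  rw [h1, h2]
  field_simp
  ring
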